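/- Let ψ : ℝ³ → ℂ⁴ be continuously differentiable and let x ∈ ℝ³ with x ≠ 0. Then −i Σ_{j=1}^3 α_j ∂_jψ(x) = −i (α·x̂) [ (∂_rψ)(x) + ψ(x)/|x| − (1/|x|)((1+2S·L)ψ)(x) ]. -/

import Mathlib

open MeasureTheory Real ComplexConjugate
open scoped InnerProductSpace

noncomputable section

abbrev R3 := EuclideanSpace ℝ (Fin 3)
abbrev C4 := EuclideanSpace ℂ (Fin 4)

/-- The Pauli matrices. -/
def pauli : Fin 3 → Matrix (Fin 2) (Fin 2) ℂ
  | 0 => !![0, 1; 1, 0]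
  | 1 => !![0, -Complex.I; Complex.I, 0]
  | 2 => !![1, 0; 0, -1]

/-- Reindex a 2×2 block matrix as a 4×4 matrix. -/
def blocks4 (A B C D : Matrix (Fin 2) (Fin 2) ℂ) : Matrix (Fin 4) (Fin 4) ℂ :=
  Matrix.reindex finSumFinEquiv finSumFinEquiv (Matrix.fromBlocks A B C D)

/-- The Dirac alpha matrices. -/
def diracAlpha (j : Fin 3) : Matrix (Fin 4) (Fin 4) ℂ :=
  blocks4 0 (pauli j) (pauli j) 0

/-- The Dirac beta matrix. -/
def diracBeta : Matrix (Fin 4) (Fin 4) ℂ :=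
  blocks4 1 0 0 (-1)

/-- The spin matrices Sⱼ. -/
def spinS (j : Fin 3) : Matrix (Fin 4) (Fin 4) ℂ :=
  (1/2 : ℂ) • blocks4 (pauli j) 0 0 (pauli j)

/-- Action of a 4×4 complex matrix on ℂ⁴. -/
def act (M : Matrix (Fin 4) (Fin 4) ℂ) (v : C4) : C4 :=
  WithLp.toLp 2 (M.mulVec v)

/-- Partial derivative of a ℂ⁴-valued function on ℝ³. -/
def pderiv3 (j : Fin 3) (ψ : R3 → C4) (x : R3) : C4 :=
  fderiv ℝ ψ x (EuclideanSpace.single j 1)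

/-- The free Dirac operator with mass m. -/
def diracOp (m : ℝ) (ψ : R3 → C4) (x : R3) : C4 :=
  (-Complex.I) • ∑ j, act (diracAlpha j) (pderiv3 j ψ x) + (m : ℂ) • act diracBeta (ψ x)

/-- The massless Dirac operator `-iα·∇`. -/
def masslessDirac (ψ : R3 → C4) (x : R3) : C4 :=
  (-Complex.I) • ∑ j, act (diracAlpha j) (pderiv3 j ψ x)

/-- The orbital angular momentum component Lⱼψ = −i (x × ∇ψ)ⱼ. -/
def orbL (j : Fin 3) (ψ : R3 → C4) (x : R3) : C4 :=
  (-Complex.I) • ((x (j + 1) : ℂ) • pderiv3 (j + 2) ψ x - (x (j + 2) : ℂ) • pderiv3 (j + 1) ψ x)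

/-- The spin-orbit operator (1 + 2 S·L). -/
def spinOrbit (ψ : R3 → C4) (x : R3) : C4 :=
  ψ x + (2 : ℂ) • ∑ j, act (spinS j) (orbL j ψ x)

/-- The radial derivative of a scalar function on ℝ³. -/
def radialDeriv (f : R3 → ℝ) (x : R3) : ℝ :=
  ∑ j, (x j / ‖x‖) * fderiv ℝ f x (EuclideanSpace.single j 1)

/-- The radial derivative of a ℂ⁴-valued function on ℝ³. -/
def radialDerivV (ψ : R3 → C4) (x : R3) : C4 :=
  ∑ j, ((x j / ‖x‖ : ℝ) : ℂ) • pderiv3 j ψ x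

/-- α·x̂, the Dirac matrix contracted with the unit radial vector. -/
def alphaHat (x : R3) : Matrix (Fin 4) (Fin 4) ℂ :=
  ∑ j, ((x j / ‖x‖ : ℝ) : ℂ) • diracAlpha j

/-- A function on ℝ³ is radial if it depends only on the norm of its argument. -/
def IsRadial {E : Type*} (f : R3 → E) : Prop :=
  ∀ x y : R3, ‖x‖ = ‖y‖ → f x = f y

-- ### auxiliary
set_option maxHeartbeats 1000000

private lemma blocks4_apply (A B C D : Matrix (Fin 2) (Fin 2) ℂ) (i j : Fin 4) :
    blocks4 A B C D i j =
      Matrix.fromBlocks A B C D (![Sum.inl 0, Sum.inl 1, Sum.inr 0, Sum.inr 1] i)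
        (![Sum.inl 0, Sum.inl 1, Sum.inr 0, Sum.inr 1] j) := by
  have h : ∀ k : Fin 4, (finSumFinEquiv.symm : Fin (2+2) → Sum (Fin 2) (Fin 2)) k =
      ![Sum.inl 0, Sum.inl 1, Sum.inr 0, Sum.inr 1] k := by decide
  simp [blocks4, Matrix.reindex_apply, Matrix.submatrix_apply, h]

private lemma diracAlpha_eq : diracAlpha = ![!![0,0,0,1;0,0,1,0;0,1,0,0;1,0,0,0],
    !![0,0,0,-Complex.I;0,0,Complex.I,0;0,-Complex.I,0,0;Complex.I,0,0,0],
    !![0,0,1,0;0,0,0,-1;1,0,0,0;0,-1,0,0]] := by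
  funext m
  fin_cases m <;> (ext i j; fin_cases i <;> fin_cases j <;>
    simp [diracAlpha, blocks4_apply, pauli, Matrix.fromBlocks, Matrix.vecHead, Matrix.vecTail])

private lemma spinS_eq : spinS = ![(1/2 : ℂ) • !![0,1,0,0;1,0,0,0;0,0,0,1;0,0,1,0],
    (1/2 : ℂ) • !![0,-Complex.I,0,0;Complex.I,0,0,0;0,0,0,-Complex.I;0,0,Complex.I,0],
    (1/2 : ℂ) • !![1,0,0,0;0,-1,0,0;0,0,1,0;0,0,0,-1]] := by
  funext m
  fin_cases m <;> (ext i j; fin_cases i <;> fin_cases j <;>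
    simp [spinS, blocks4_apply, pauli, Matrix.fromBlocks, Matrix.vecHead, Matrix.vecTail])

private lemma one4 : (1 : Matrix (Fin 4) (Fin 4) ℂ) = !![1,0,0,0;0,1,0,0;0,0,1,0;0,0,0,1] := by
  ext i j; fin_cases i <;> fin_cases j <;> simp [Matrix.one_apply, Matrix.vecHead, Matrix.vecTail]

/-- The block matrix appearing in the polar decomposition. -/
private def Mm (c : Fin 3 → ℝ) (m : Fin 3) : Matrix (Fin 4) (Fin 4) ℂ :=
  (c m : ℂ) • 1 + (2 * Complex.I * (c (m+2) : ℝ)) • spinS (m+1)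
    - (2 * Complex.I * (c (m+1) : ℝ)) • spinS (m+2)

private lemma sumAlpha (c : Fin 3 → ℝ) :
    (∑ k, (c k : ℂ) • diracAlpha k) =
      !![0,0,(c 2:ℂ),(c 0:ℂ)-(c 1:ℂ)*Complex.I;
         0,0,(c 0:ℂ)+(c 1:ℂ)*Complex.I,-(c 2:ℂ);
         (c 2:ℂ),(c 0:ℂ)-(c 1:ℂ)*Complex.I,0,0;
         (c 0:ℂ)+(c 1:ℂ)*Complex.I,-(c 2:ℂ),0,0] := by
  rw [diracAlpha_eq, Fin.sum_univ_three]
  ext i j; fin_cases i <;> fin_cases j <;>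
    (simp [Matrix.vecHead, Matrix.vecTail]; try ring)

private lemma Mm0 (c : Fin 3 → ℝ) : Mm c 0 =
    !![(c 0:ℂ)-Complex.I*(c 1:ℂ),(c 2:ℂ),0,0;
       -(c 2:ℂ),(c 0:ℂ)+Complex.I*(c 1:ℂ),0,0;
       0,0,(c 0:ℂ)-Complex.I*(c 1:ℂ),(c 2:ℂ);
       0,0,-(c 2:ℂ),(c 0:ℂ)+Complex.I*(c 1:ℂ)] := by
  rw [Mm, spinS_eq, one4]
  norm_num
  ext i j; fin_cases i <;> fin_cases j <;>
    (simp [Matrix.vecHead, Matrix.vecTail]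
     try ring_nf
     try simp only [Complex.I_sq]
     try ring)

private lemma Mm1 (c : Fin 3 → ℝ) : Mm c 1 =
    !![(c 1:ℂ)+Complex.I*(c 0:ℂ),-Complex.I*(c 2:ℂ),0,0;
       -Complex.I*(c 2:ℂ),(c 1:ℂ)-Complex.I*(c 0:ℂ),0,0;
       0,0,(c 1:ℂ)+Complex.I*(c 0:ℂ),-Complex.I*(c 2:ℂ);
       0,0,-Complex.I*(c 2:ℂ),(c 1:ℂ)-Complex.I*(c 0:ℂ)] := by
  rw [Mm, spinS_eq, one4]
  norm_num
  ext i j; fin_cases i <;> fin_cases j <;>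
    (simp [Matrix.vecHead, Matrix.vecTail]
     try ring_nf
     try simp only [Complex.I_sq]
     try ring)

private lemma Mm2 (c : Fin 3 → ℝ) : Mm c 2 =
    !![(c 2:ℂ),Complex.I*(c 1:ℂ)-(c 0:ℂ),0,0;
       Complex.I*(c 1:ℂ)+(c 0:ℂ),(c 2:ℂ),0,0;
       0,0,(c 2:ℂ),Complex.I*(c 1:ℂ)-(c 0:ℂ);
       0,0,Complex.I*(c 1:ℂ)+(c 0:ℂ),(c 2:ℂ)] := by
  rw [Mm, spinS_eq, one4]
  norm_num
  ext i j; fin_cases i <;> fin_cases j <;>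
    (simp [Matrix.vecHead, Matrix.vecTail]
     try ring_nf
     try simp only [Complex.I_sq]
     try ring)

private lemma act_add (M : Matrix (Fin 4) (Fin 4) ℂ) (v w : C4) :
    act M (v + w) = act M v + act M w := by
  simp only [act, WithLp.ofLp_add, Matrix.mulVec_add, WithLp.toLp_add]
private lemma act_sub (M : Matrix (Fin 4) (Fin 4) ℂ) (v w : C4) :
    act M (v - w) = act M v - act M w := by
  simp only [act, WithLp.ofLp_sub, Matrix.mulVec_sub, WithLp.toLp_sub]
private lemma act_smul (M : Matrix (Fin 4) (Fin 4) ℂ) (a : ℂ) (v : C4) :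
    act M (a • v) = a • act M v := by
  simp only [act, WithLp.ofLp_smul, Matrix.mulVec_smul, WithLp.toLp_smul]
private lemma act_matsmul (a : ℂ) (M : Matrix (Fin 4) (Fin 4) ℂ) (v : C4) :
    act (a • M) v = a • act M v := by
  simp only [act, Matrix.smul_mulVec, WithLp.toLp_smul]
private lemma act_matadd (M N : Matrix (Fin 4) (Fin 4) ℂ) (v : C4) :
    act (M + N) v = act M v + act N v := by
  simp only [act, Matrix.add_mulVec, WithLp.toLp_add]
private lemma act_matsub (M N : Matrix (Fin 4) (Fin 4) ℂ) (v : C4) :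
    act (M - N) v = act M v - act N v := by
  simp only [act, Matrix.sub_mulVec, WithLp.toLp_sub]
private lemma act_one (v : C4) : act 1 v = v := by
  simp only [act, Matrix.one_mulVec, WithLp.toLp_ofLp]
private lemma act_mul (M N : Matrix (Fin 4) (Fin 4) ℂ) (v : C4) :
    act (M * N) v = act M (act N v) := by
  simp only [act, WithLp.ofLp_toLp, Matrix.mulVec_mulVec]

private lemma key0 (c : Fin 3 → ℝ) :
    (∑ k, (c k : ℂ) • diracAlpha k) * Mm c 0 =
      (((c 0 : ℂ))^2 + ((c 1 : ℂ))^2 + ((c 2 : ℂ))^2) • diracAlpha 0 := by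
  rw [sumAlpha, Mm0, diracAlpha_eq]
  simp only [Matrix.cons_val_zero]
  ext i j; fin_cases i <;> fin_cases j <;>
    (simp [Matrix.mul_apply, Fin.sum_univ_four, Matrix.vecHead, Matrix.vecTail]
     try ring_nf
     try simp only [Complex.I_sq]
     try ring)

private lemma key1 (c : Fin 3 → ℝ) :
    (∑ k, (c k : ℂ) • diracAlpha k) * Mm c 1 =
      (((c 0 : ℂ))^2 + ((c 1 : ℂ))^2 + ((c 2 : ℂ))^2) • diracAlpha 1 := by
  rw [sumAlpha, Mm1, diracAlpha_eq]
  simp only [Matrix.cons_val_one, Matrix.head_cons]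
  ext i j; fin_cases i <;> fin_cases j <;>
    (simp [Matrix.mul_apply, Fin.sum_univ_four, Matrix.vecHead, Matrix.vecTail]
     try ring_nf
     try simp only [Complex.I_sq]
     try ring)

private lemma key2 (c : Fin 3 → ℝ) :
    (∑ k, (c k : ℂ) • diracAlpha k) * Mm c 2 =
      (((c 0 : ℂ))^2 + ((c 1 : ℂ))^2 + ((c 2 : ℂ))^2) • diracAlpha 2 := by
  rw [sumAlpha, Mm2, diracAlpha_eq]
  simp only [Matrix.cons_val_two, Matrix.tail_cons, Matrix.head_cons]
  ext i j; fin_cases i <;> fin_cases j <;>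
    (simp [Matrix.mul_apply, Fin.sum_univ_four, Matrix.vecHead, Matrix.vecTail]
     try ring_nf
     try simp only [Complex.I_sq]
     try ring)

private lemma key (c : Fin 3 → ℝ) (m : Fin 3) :
    (∑ k, (c k : ℂ) • diracAlpha k) * Mm c m =
      (((c 0 : ℂ))^2 + ((c 1 : ℂ))^2 + ((c 2 : ℂ))^2) • diracAlpha m := by
  fin_cases m
  · exact key0 c
  · exact key1 c
  · exact key2 c

/-- The polar decomposition of the massless Dirac operator:
`-iα·∇ = -i(α·x̂)(∂_r + 1/|x| - (1/|x|)(1+2S·L))`. -/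
theorem dirac_polar_decomposition (ψ : R3 → C4) (hψ : ContDiff ℝ 1 ψ)
    (x : R3) (hx : x ≠ 0) :
    (-Complex.I) • ∑ j, act (diracAlpha j) (pderiv3 j ψ x) =
      (-Complex.I) • act (alphaHat x)
        (radialDerivV ψ x + ((‖x‖⁻¹ : ℝ) : ℂ) • ψ x
          - ((‖x‖⁻¹ : ℝ) : ℂ) • spinOrbit ψ x) := by
  have hn0 : ‖x‖ ≠ 0 := norm_ne_zero_iff.mpr hx
  have hxn : ‖x‖^2 = (x 0)^2 + (x 1)^2 + (x 2)^2 := by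
    rw [EuclideanSpace.norm_eq, Real.sq_sqrt (by positivity)]
    simp [Fin.sum_univ_three, sq_abs]
  have hc : ((x 0 / ‖x‖ : ℝ) : ℂ)^2 + ((x 1 / ‖x‖ : ℝ) : ℂ)^2 + ((x 2 / ‖x‖ : ℝ) : ℂ)^2 = 1 := by
    have h : (x 0 / ‖x‖)^2 + (x 1 / ‖x‖)^2 + (x 2 / ‖x‖)^2 = 1 := by
      field_simp
      linarith [hxn]
    have h' := congrArg Complex.ofReal h
    simpa only [Complex.ofReal_add, Complex.ofReal_pow, Complex.ofReal_one] using h'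
  set c : Fin 3 → ℝ := fun j => x j / ‖x‖ with hc_def
  have hbracket :
      radialDerivV ψ x + ((‖x‖⁻¹ : ℝ) : ℂ) • ψ x - ((‖x‖⁻¹ : ℝ) : ℂ) • spinOrbit ψ x
        = ∑ m, act (Mm c m) (pderiv3 m ψ x) := by
    simp only [radialDerivV, spinOrbit, orbL, Mm, Fin.sum_univ_three,
      act_sub, act_add, act_smul, act_matsmul, act_matadd, act_matsub, act_one,
      hc_def, Fin.reduceAdd]
    push_cast
    module
  rw [hbracket]
  have halpha : alphaHat x = ∑ k, (c k : ℂ) • diracAlpha k := by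
    simp only [alphaHat, hc_def]
  have hfin : act (alphaHat x) (∑ m, act (Mm c m) (pderiv3 m ψ x))
      = ∑ m, act (diracAlpha m) (pderiv3 m ψ x) := by
    rw [halpha, Fin.sum_univ_three (f := fun m => act (Mm c m) (pderiv3 m ψ x))]
    simp only [act_add, ← act_mul]
    rw [key c 0, key c 1, key c 2]
    rw [Fin.sum_univ_three (f := fun m => act (diracAlpha m) (pderiv3 m ψ x))]
    simp only [hc_def] at hc
    rw [hc]
    simp only [one_smul]
  rw [hfin]
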